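/- Let λ_E, λ_Is, λ_Ia > 0, β_Is, β_Ia ≥ 0, p_Is, p_Ia ∈ [0,1], and integer shape parameters k_E, k_Is, k_Ia ≥ 1, and let σ and δ be the associated m×m matrices. Then the matrix −δ·σ⁻¹ has all rows equal to zero except the first row, and its (1,1) entry equals β_Is·p_Is·k_Is/λ_Is + β_Ia·p_Ia·k_Ia/λ_Ia; consequently, the eigenvalues of −δ·σ⁻¹ are exactly β_Is·p_Is·k_Is/λ_Is + β_Ia·p_Ia·k_Ia/λ_Ia and 0. -/

import Mathlib

open Matrix Polynomial Kronecker

/-- The set of complex eigenvalues of a real square matrix: the roots of its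
characteristic polynomial over `ℂ`. -/
noncomputable def eigSet {n : Type*} [Fintype n] [DecidableEq n] (M : Matrix n n ℝ) : Set ℂ :=
  {z : ℂ | ((M.map (algebraMap ℝ ℂ)).charpoly).IsRoot z}

/-- The spectral bound `s(M)`: the maximum real part of the eigenvalues. -/
noncomputable def specBound {n : Type*} [Fintype n] [DecidableEq n] (M : Matrix n n ℝ) : ℝ :=
  sSup (Complex.re '' eigSet M)

/-- The spectral radius `ρ(M)`: the maximum modulus of the eigenvalues. -/
noncomputable def specRadius {n : Type*} [Fintype n] [DecidableEq n] (M : Matrix n n ℝ) : ℝ :=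
  sSup ((fun (z : ℂ) => ‖z‖) '' eigSet M)

/-- `H_k`: `-1` on the diagonal, `1` on the first subdiagonal, `0` elsewhere. -/
def Hmat (k : ℕ) : Matrix (Fin k) (Fin k) ℝ :=
  Matrix.of fun i j => if (i : ℕ) = (j : ℕ) then -1 else if (i : ℕ) = (j : ℕ) + 1 then 1 else 0

/-- `F_k`: lower triangular matrix with all entries on and below the diagonal equal to `1`. -/
def Fmat (k : ℕ) : Matrix (Fin k) (Fin k) ℝ :=
  Matrix.of fun i j => if (j : ℕ) ≤ (i : ℕ) then 1 else 0

/-- `G_{k₁,k₂}`: `1` in the upper-right corner, `0` elsewhere. -/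
def Gmat (k1 k2 : ℕ) : Matrix (Fin k1) (Fin k2) ℝ :=
  Matrix.of fun i j => if (i : ℕ) = 0 ∧ (j : ℕ) = k2 - 1 then 1 else 0

/-- `J_{k₁,k₂}`: the all-ones matrix. -/
def Jmat (k1 k2 : ℕ) : Matrix (Fin k1) (Fin k2) ℝ :=
  Matrix.of fun _ _ => 1

/-- The block matrix σ with row/column blocks of sizes `(k_E, k_Is, k_Ia)`:
`σ = [[λ_E·H_{k_E}, 0, 0], [p_Is·λ_E·G_{k_Is,k_E}, λ_Is·H_{k_Is}, 0],
      [p_Ia·λ_E·G_{k_Ia,k_E}, 0, λ_Ia·H_{k_Ia}]]`. -/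
noncomputable def sigmaMat (lE lIs lIa pIs pIa : ℝ) (kE kIs kIa : ℕ) :
    Matrix (Fin kE ⊕ (Fin kIs ⊕ Fin kIa)) (Fin kE ⊕ (Fin kIs ⊕ Fin kIa)) ℝ :=
  Matrix.fromBlocks (lE • Hmat kE) 0
    (Matrix.fromRows ((pIs * lE) • Gmat kIs kE) ((pIa * lE) • Gmat kIa kE))
    (Matrix.fromBlocks (lIs • Hmat kIs) 0 0 (lIa • Hmat kIa))

/-- The matrix δ: its first row is `(0,…,0, β_Is,…,β_Is, β_Ia,…,β_Ia)` (with `k_E` zeros,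
`k_Is` copies of `β_Is`, `k_Ia` copies of `β_Ia`), and all other rows are zero. -/
def deltaMat (bIs bIa : ℝ) (kE kIs kIa : ℕ) :
    Matrix (Fin kE ⊕ (Fin kIs ⊕ Fin kIa)) (Fin kE ⊕ (Fin kIs ⊕ Fin kIa)) ℝ :=
  Matrix.of fun i j =>
    Sum.elim
      (fun i1 : Fin kE =>
        if (i1 : ℕ) = 0 then
          Sum.elim (fun _ : Fin kE => (0 : ℝ))
            (Sum.elim (fun _ : Fin kIs => bIs) (fun _ : Fin kIa => bIa)) j
        else 0)
      (fun _ => 0) i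

open Finset in
lemma sum_mul_H {k : ℕ} (f : Fin k → ℝ) (j : Fin k) :
    ∑ i, f i * Hmat k i j =
      (if h : (j : ℕ) + 1 < k then f ⟨(j : ℕ) + 1, h⟩ else 0) - f j := by
  by_cases h : (j : ℕ) + 1 < k
  · have hsplit : ∀ i : Fin k, Hmat k i j =
        (if i = j then (-1:ℝ) else 0) + (if i = ⟨(j:ℕ)+1, h⟩ then (1:ℝ) else 0) := by
      intro i
      simp only [Hmat, Matrix.of_apply, Fin.ext_iff]
      split_ifs <;> first | omega | norm_num
    simp only [hsplit, mul_add, Finset.sum_add_distrib, mul_ite, mul_neg_one, mul_one, mul_zero,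
      Finset.sum_ite_eq', Finset.mem_univ, if_true, dif_pos h]
    ring
  · have hsplit : ∀ i : Fin k, Hmat k i j = (if i = j then (-1:ℝ) else 0) := by
      intro i
      have := i.isLt
      simp only [Hmat, Matrix.of_apply, Fin.ext_iff]
      split_ifs <;> first | omega | norm_num
    simp only [hsplit, mul_ite, mul_neg_one, mul_zero, Finset.sum_ite_eq', Finset.mem_univ,
      if_true, dif_neg h]
    ring

open Finset in
lemma sum_H_mul {k : ℕ} (f : Fin k → ℝ) (i : Fin k) :
    ∑ l, Hmat k i l * f l =
      (if h : 0 < (i : ℕ) then f ⟨(i : ℕ) - 1, lt_trans (Nat.sub_lt h one_pos) i.isLt⟩ else 0)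
        - f i := by
  by_cases h : 0 < (i : ℕ)
  · have hsplit : ∀ l : Fin k, Hmat k i l =
        (if l = i then (-1:ℝ) else 0) +
          (if l = ⟨(i:ℕ)-1, lt_trans (Nat.sub_lt h one_pos) i.isLt⟩ then (1:ℝ) else 0) := by
      intro l
      simp only [Hmat, Matrix.of_apply, Fin.ext_iff]
      split_ifs <;> first | omega | norm_num
    simp only [hsplit, add_mul, Finset.sum_add_distrib, ite_mul, neg_one_mul, one_mul, zero_mul,
      Finset.sum_ite_eq', Finset.mem_univ, if_true, dif_pos h]
    ring
  · have hsplit : ∀ l : Fin k, Hmat k i l = (if l = i then (-1:ℝ) else 0) := by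
      intro l
      simp only [Hmat, Matrix.of_apply, Fin.ext_iff]
      split_ifs <;> first | omega | norm_num
    simp only [hsplit, ite_mul, neg_one_mul, zero_mul, Finset.sum_ite_eq', Finset.mem_univ,
      if_true, dif_neg h]
    ring

open Finset in
lemma sum_mul_G {k1 k2 : ℕ} (hk1 : 0 < k1) (f : Fin k1 → ℝ) (j : Fin k2) :
    ∑ i, f i * Gmat k1 k2 i j = if (j : ℕ) = k2 - 1 then f ⟨0, hk1⟩ else 0 := by
  by_cases hj : (j : ℕ) = k2 - 1
  · have hsplit : ∀ i : Fin k1, Gmat k1 k2 i j = (if i = ⟨0, hk1⟩ then (1:ℝ) else 0) := by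
      intro i
      simp only [Gmat, Matrix.of_apply, Fin.ext_iff]
      split_ifs <;> first | omega | norm_num
    simp [hsplit, Finset.sum_ite_eq', hj]
  · have hsplit : ∀ i : Fin k1, Gmat k1 k2 i j = 0 := by
      intro i
      simp only [Gmat, Matrix.of_apply]
      split_ifs <;> first | omega | norm_num
    simp [hsplit, hj]


lemma H_mul_F (k : ℕ) : Hmat k * Fmat k = -1 := by
  ext i j
  rw [Matrix.mul_apply, sum_H_mul (fun l => Fmat k l j) i]
  simp only [Fmat, Matrix.of_apply, Matrix.neg_apply, Matrix.one_apply, Fin.ext_iff]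
  by_cases h : 0 < (i : ℕ)
  · rw [dif_pos h]
    split_ifs <;> first | omega | norm_num
  · rw [dif_neg h]
    split_ifs <;> first | omega | norm_num

lemma isUnit_det_smul_H {c : ℝ} (hc : c ≠ 0) (k : ℕ) : IsUnit ((c • Hmat k).det) := by
  apply Matrix.isUnit_det_of_right_inverse (B := (-c⁻¹) • Fmat k)
  rw [Matrix.smul_mul, Matrix.mul_smul, smul_smul, H_mul_F]
  rw [smul_neg, ← neg_smul]
  rw [show -(c * -c⁻¹) = (1:ℝ) by field_simp]
  exact one_smul _ _

open Finset in
lemma det_single_row {n : Type*} [Fintype n] [DecidableEq n] {R : Type*} [CommRing R]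
    (A : Matrix n n R) (i0 : n) (x : R)
    (h : ∀ i, i ≠ i0 → ∀ j, A i j = if i = j then x else 0) :
    A.det = A i0 i0 * x ^ (Fintype.card n - 1) := by
  rw [Matrix.det_apply]
  rw [Finset.sum_eq_single (1 : Equiv.Perm n)]
  · simp only [Equiv.Perm.sign_one, one_smul, Equiv.Perm.one_apply]
    rw [← Finset.mul_prod_erase univ _ (mem_univ i0)]
    congr 1
    rw [Finset.prod_congr rfl (fun i hi => ?_), Finset.prod_const,
      Finset.card_erase_of_mem (mem_univ i0), Finset.card_univ]
    rw [h i (Finset.ne_of_mem_erase hi), if_pos rfl]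
  · intro σ _ hσ
    obtain ⟨i, hi1, hi2⟩ : ∃ i, σ i ≠ i ∧ σ i ≠ i0 := by
      obtain ⟨j, hj⟩ : ∃ j, σ j ≠ j := by
        by_contra hc
        push_neg at hc
        exact hσ (Equiv.ext hc)
      by_cases hji : σ j = i0
      · have hj0 : j ≠ i0 := fun e => hj (hji.trans e.symm)
        have hs : σ i0 ≠ i0 := fun e => hj0 (σ.injective (by rw [hji, e]))
        exact ⟨i0, hs, hs⟩
      · exact ⟨j, hj, hji⟩
    rw [Finset.prod_eq_zero (mem_univ i), smul_zero]
    rw [h _ hi2, if_neg hi1]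
  · intro h1; exact absurd (mem_univ _) h1


/-- The matrix `-δ·σ⁻¹` has all rows other than the first equal to zero,
its `(1,1)` entry equals `β_Is·p_Is·k_Is/λ_Is + β_Ia·p_Ia·k_Ia/λ_Ia`, and its eigenvalues
are exactly this quantity and `0`. -/
theorem stmt7 (lE lIs lIa : ℝ) (hlE : 0 < lE) (hlIs : 0 < lIs) (hlIa : 0 < lIa)
    (bIs bIa : ℝ) (hbIs : 0 ≤ bIs) (hbIa : 0 ≤ bIa)
    (pIs pIa : ℝ) (hpIs : pIs ∈ Set.Icc (0 : ℝ) 1) (hpIa : pIa ∈ Set.Icc (0 : ℝ) 1)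
    (kE kIs kIa : ℕ) (hkE : 1 ≤ kE) (hkIs : 1 ≤ kIs) (hkIa : 1 ≤ kIa) :
    (∀ i, i ≠ Sum.inl (⟨0, hkE⟩ : Fin kE) →
      ∀ j, (-(deltaMat bIs bIa kE kIs kIa *
        (sigmaMat lE lIs lIa pIs pIa kE kIs kIa)⁻¹)) i j = 0) ∧
    (-(deltaMat bIs bIa kE kIs kIa * (sigmaMat lE lIs lIa pIs pIa kE kIs kIa)⁻¹))
        (Sum.inl (⟨0, hkE⟩ : Fin kE)) (Sum.inl (⟨0, hkE⟩ : Fin kE)) =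
      bIs * pIs * (kIs : ℝ) / lIs + bIa * pIa * (kIa : ℝ) / lIa ∧
    eigSet (-(deltaMat bIs bIa kE kIs kIa * (sigmaMat lE lIs lIa pIs pIa kE kIs kIa)⁻¹)) =
      {((bIs * pIs * (kIs : ℝ) / lIs + bIa * pIa * (kIa : ℝ) / lIa : ℝ) : ℂ), 0} := by
  
  have hlIs0 : lIs ≠ 0 := ne_of_gt hlIs
  have hlIa0 : lIa ≠ 0 := ne_of_gt hlIa
  set r : ℝ := bIs * pIs * (kIs : ℝ) / lIs + bIa * pIa * (kIa : ℝ) / lIa with hr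
  set N : Matrix (Fin kE ⊕ (Fin kIs ⊕ Fin kIa)) (Fin kE ⊕ (Fin kIs ⊕ Fin kIa)) ℝ :=
    Matrix.of fun i j =>
      Sum.elim (fun i1 : Fin kE => if (i1 : ℕ) = 0 then
          Sum.elim (fun _ : Fin kE => -r)
            (Sum.elim (fun j2 : Fin kIs => -(bIs / lIs) * ((kIs : ℝ) - (j2 : ℕ)) * 1)
              (fun j3 : Fin kIa => -(bIa / lIa) * ((kIa : ℝ) - (j3 : ℕ)) * 1)) j
        else 0) (fun _ => 0) i with hNdef
  have hNs : N * sigmaMat lE lIs lIa pIs pIa kE kIs kIa = deltaMat bIs bIa kE kIs kIa := by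
    ext i j
    rw [Matrix.mul_apply, Fintype.sum_sum_type]
    cases i with
    | inr i2 =>
      simp [hNdef, deltaMat, Fintype.sum_sum_type]
    | inl i1 =>
      by_cases h0 : (i1 : ℕ) = 0
      · cases j with
        | inl j1 =>
          simp only [hNdef, sigmaMat, deltaMat, Matrix.of_apply, Sum.elim_inl, Sum.elim_inr,
            Matrix.fromBlocks_apply₁₁, Matrix.fromBlocks_apply₂₁,
            Matrix.fromRows_apply_inl, Matrix.fromRows_apply_inr,
            Matrix.smul_apply, smul_eq_mul, if_pos h0, Fintype.sum_sum_type]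
          have e1 : ∑ a : Fin kE, -r * (lE * Hmat kE a j1)
              = ∑ a : Fin kE, (fun _ : Fin kE => -r * lE) a * Hmat kE a j1 :=
            Finset.sum_congr rfl (by intros; ring)
          have e2 : ∑ b : Fin kIs, -(bIs / lIs) * ((kIs : ℝ) - (b : ℕ)) * 1 *
                (pIs * lE * Gmat kIs kE b j1)
              = ∑ b : Fin kIs,
                  (fun b : Fin kIs => -(bIs / lIs) * ((kIs : ℝ) - (b : ℕ)) * (pIs * lE)) b *
                    Gmat kIs kE b j1 :=
            Finset.sum_congr rfl (by intros; ring)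
          have e3 : ∑ c : Fin kIa, -(bIa / lIa) * ((kIa : ℝ) - (c : ℕ)) * 1 *
                (pIa * lE * Gmat kIa kE c j1)
              = ∑ c : Fin kIa,
                  (fun c : Fin kIa => -(bIa / lIa) * ((kIa : ℝ) - (c : ℕ)) * (pIa * lE)) c *
                    Gmat kIa kE c j1 :=
            Finset.sum_congr rfl (by intros; ring)
          rw [e1, e2, e3, sum_mul_H, sum_mul_G hkIs, sum_mul_G hkIa]
          by_cases hj1 : (j1 : ℕ) + 1 < kE
          · rw [dif_pos hj1, if_neg (by omega), if_neg (by omega)]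
            ring
          · rw [dif_neg hj1, if_pos (by omega), if_pos (by omega)]
            simp only [Fin.val_mk, Nat.cast_zero, sub_zero, hr]
            field_simp
            ring
        | inr j23 =>
          cases j23 with
          | inl j2 =>
            simp only [hNdef, sigmaMat, deltaMat, Matrix.of_apply, Sum.elim_inl, Sum.elim_inr,
              Matrix.fromBlocks_apply₁₂, Matrix.fromBlocks_apply₂₂,
              Matrix.fromBlocks_apply₁₁, Matrix.fromBlocks_apply₂₁,
              Matrix.smul_apply, smul_eq_mul, if_pos h0, Fintype.sum_sum_type,
              Matrix.zero_apply, mul_zero, Finset.sum_const_zero, zero_add, add_zero]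
            have e2 : ∑ b : Fin kIs, -(bIs / lIs) * ((kIs : ℝ) - (b : ℕ)) * 1 *
                  (lIs * Hmat kIs b j2)
                = ∑ b : Fin kIs,
                    (fun b : Fin kIs => -(bIs / lIs) * ((kIs : ℝ) - (b : ℕ)) * lIs) b *
                      Hmat kIs b j2 :=
              Finset.sum_congr rfl (by intros; ring)
            rw [e2, sum_mul_H]
            by_cases hj2 : (j2 : ℕ) + 1 < kIs
            · rw [dif_pos hj2]
              simp only [Fin.val_mk]
              push_cast
              field_simp
              ring
            · rw [dif_neg hj2]
              have hv : (j2 : ℕ) = kIs - 1 := by omega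
              rw [hv, Nat.cast_sub hkIs, Nat.cast_one]
              field_simp
              ring

          | inr j3 =>
            simp only [hNdef, sigmaMat, deltaMat, Matrix.of_apply, Sum.elim_inl, Sum.elim_inr,
              Matrix.fromBlocks_apply₁₂, Matrix.fromBlocks_apply₂₂,
              Matrix.fromBlocks_apply₁₁, Matrix.fromBlocks_apply₂₁,
              Matrix.smul_apply, smul_eq_mul, if_pos h0, Fintype.sum_sum_type,
              Matrix.zero_apply, mul_zero, Finset.sum_const_zero, zero_add, add_zero]
            have e3 : ∑ c : Fin kIa, -(bIa / lIa) * ((kIa : ℝ) - (c : ℕ)) * 1 *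
                  (lIa * Hmat kIa c j3)
                = ∑ c : Fin kIa,
                    (fun c : Fin kIa => -(bIa / lIa) * ((kIa : ℝ) - (c : ℕ)) * lIa) c *
                      Hmat kIa c j3 :=
              Finset.sum_congr rfl (by intros; ring)
            rw [e3, sum_mul_H]
            by_cases hj3 : (j3 : ℕ) + 1 < kIa
            · rw [dif_pos hj3]
              simp only [Fin.val_mk]
              push_cast
              field_simp
              ring
            · rw [dif_neg hj3]
              have hv : (j3 : ℕ) = kIa - 1 := by omega
              rw [hv, Nat.cast_sub hkIa, Nat.cast_one]
              field_simp
              ring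

      · simp [hNdef, deltaMat, h0, Fintype.sum_sum_type]
  have hdet : IsUnit (sigmaMat lE lIs lIa pIs pIa kE kIs kIa).det := by
    rw [sigmaMat, Matrix.det_fromBlocks_zero₁₂, Matrix.det_fromBlocks_zero₁₂]
    exact (isUnit_det_smul_H (ne_of_gt hlE) kE).mul
      ((isUnit_det_smul_H (ne_of_gt hlIs) kIs).mul (isUnit_det_smul_H (ne_of_gt hlIa) kIa))
  have key : deltaMat bIs bIa kE kIs kIa * (sigmaMat lE lIs lIa pIs pIa kE kIs kIa)⁻¹ = N := by
    rw [← hNs]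
    exact Matrix.mul_nonsing_inv_cancel_right _ _ hdet
  rw [key]
  refine ⟨?_, ?_, ?_⟩
  · intro i hi j
    rw [Matrix.neg_apply]
    cases i with
    | inl i1 =>
      have h0 : (i1 : ℕ) ≠ 0 := by
        intro e
        exact hi (by rw [show i1 = (⟨0, hkE⟩ : Fin kE) from Fin.ext e])
      simp [hNdef, h0]
    | inr i2 => simp [hNdef]
  · rw [Matrix.neg_apply]
    simp [hNdef]
  · have hNC : ∀ i, i ≠ Sum.inl (⟨0, hkE⟩ : Fin kE) →
        ∀ j, ((-N).map (algebraMap ℝ ℂ)) i j = 0 := by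
      intro i hi j
      cases i with
      | inl i1 =>
        have h0 : (i1 : ℕ) ≠ 0 := by
          intro e
          exact hi (by rw [show i1 = (⟨0, hkE⟩ : Fin kE) from Fin.ext e])
        simp [hNdef, h0]
      | inr i2 => simp [hNdef]
    have hdiag : ((-N).map (algebraMap ℝ ℂ))
        (Sum.inl (⟨0, hkE⟩ : Fin kE)) (Sum.inl (⟨0, hkE⟩ : Fin kE)) = (r : ℂ) := by
      simp [hNdef]
    have hcard : Fintype.card (Fin kE ⊕ (Fin kIs ⊕ Fin kIa)) = kE + (kIs + kIa) := by simp
    have hpow : kE + (kIs + kIa) - 1 ≠ 0 := by omega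
    have hcp : ((-N).map (algebraMap ℝ ℂ)).charpoly
        = (X - C (r : ℂ)) * X ^ (kE + (kIs + kIa) - 1) := by
      unfold Matrix.charpoly
      rw [det_single_row _ (Sum.inl (⟨0, hkE⟩ : Fin kE)) X ?_]
      · rw [Matrix.charmatrix_apply_eq, hdiag, hcard]
      · intro i hi j
        by_cases hij : i = j
        · subst hij
          rw [Matrix.charmatrix_apply_eq, hNC i hi i, map_zero, sub_zero, if_pos rfl]
        · rw [Matrix.charmatrix_apply_ne _ _ _ hij, hNC i hi j, map_zero, neg_zero, if_neg hij]
    ext z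
    simp only [eigSet, Set.mem_setOf_eq, hcp, IsRoot.def, eval_mul, eval_sub, eval_X, eval_C,
      eval_pow, mul_eq_zero, sub_eq_zero, pow_eq_zero_iff hpow, Set.mem_insert_iff,
      Set.mem_singleton_iff]
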